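/- For every fixed t ∈ [0,1] the Quicksort process cost function has mean zero under the uniform distribution in its second argument: ∫_0^1 C(t,x) dx = 0. -/

import Mathlib

open MeasureTheory ProbabilityTheory Filter Finset

noncomputable section

/-- The Quicksort cost function `C(x) = 1 + 2x·ln x + 2(1-x)·ln(1-x)`
(with `Real.log 0 = 0`, encoding the convention `0·ln 0 = 0`). -/
def Cq (x : ℝ) : ℝ := 1 + 2 * x * Real.log x + 2 * (1 - x) * Real.log (1 - x)

/-- The Quicksort process cost function
`C(t,x) = C(x) + 2·1_{t<x}·(−1 + x + (1−t)ln(1−t) − (1−x)ln(1−x) − (x−t)ln(x−t))`. -/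
def Cqt (t x : ℝ) : ℝ :=
  Cq x + 2 * (if t < x then
    (-1 + x + (1 - t) * Real.log (1 - t) - (1 - x) * Real.log (1 - x)
      - (x - t) * Real.log (x - t)) else 0)

lemma integral_mul_log (c : ℝ) (hc : 0 ≤ c) :
    ∫ x in (0:ℝ)..c, x * Real.log x = c^2/2 * Real.log c - c^2/4 := by
  rcases hc.eq_or_lt with h | h
  · simp [← h]
  · have key := intervalIntegral.integral_eq_sub_of_hasDerivAt_of_le (a := 0) (b := c)
      (f := fun x => x/2 * (x * Real.log x) - x^2/4) (f' := fun x => x * Real.log x)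
      h.le ?_ ?_ ?_
    · rw [key]; simp; ring
    · exact (((continuous_id.div_const 2).mul Real.continuous_mul_log).sub
        ((continuous_pow 2).div_const 4)).continuousOn
    · intro x hx
      have h1 : HasDerivAt (fun x : ℝ => x * Real.log x) (Real.log x + 1) x :=
        Real.hasDerivAt_mul_log hx.1.ne'
      have h2 : HasDerivAt (fun x : ℝ => x / 2) (1 / 2) x := (hasDerivAt_id x).div_const 2
      have h3 : HasDerivAt (fun x : ℝ => x ^ 2 / 4) (2 * x ^ 1 * 1 / 4) x :=
        ((hasDerivAt_id x).pow 2).div_const 4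
      have : HasDerivAt (fun y : ℝ => y / 2 * (y * Real.log y) - y ^ 2 / 4)
          (1 / 2 * (x * Real.log x) + x / 2 * (Real.log x + 1) - 2 * x ^ 1 * 1 / 4) x :=
        (h2.mul h1).sub h3
      refine this.congr_deriv ?_
      beta_reduce
      ring
    · exact Real.continuous_mul_log.intervalIntegrable 0 c

/-- For every fixed `t ∈ [0,1]`, the Quicksort process cost function
has mean zero under the uniform distribution in its second argument:
`∫_0^1 C(t,x) dx = 0`. -/
theorem quicksort_process_cost_mean_zero :
    ∀ t ∈ Set.Icc (0 : ℝ) 1, (∫ x in (0 : ℝ)..1, Cqt t x) = 0 := by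
  intro t ht
  obtain ⟨ht0, ht1⟩ := ht
  set g : ℝ → ℝ := fun x => -1 + x + (1 - t) * Real.log (1 - t)
      - (1 - x) * Real.log (1 - x) - (x - t) * Real.log (x - t) with hg
  have hc1 : Continuous fun x : ℝ => (1 - x) * Real.log (1 - x) :=
    Real.continuous_mul_log.comp (continuous_const.sub continuous_id)
  have hc2 : Continuous fun x : ℝ => (x - t) * Real.log (x - t) :=
    Real.continuous_mul_log.comp (continuous_id.sub continuous_const)
  have hgc : Continuous g := by
    rw [hg]
    exact ((((continuous_const.add continuous_id).add continuous_const).sub hc1).sub hc2)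
  have hCqc : Continuous Cq := by
    have e : Cq = fun x : ℝ => 1 + 2 * (x * Real.log x) + 2 * ((1 - x) * Real.log (1 - x)) := by
      funext x; unfold Cq; ring
    rw [e]
    exact (continuous_const.add (continuous_const.mul Real.continuous_mul_log)).add
      (continuous_const.mul hc1)
  -- rewrite Cqt as sum
  have hrw : ∀ x, Cqt t x = Cq x + 2 * Set.indicator (Set.Ioi t) g x := by
    intro x
    unfold Cqt
    rw [Set.indicator_apply]
    simp [Set.mem_Ioi, g]
  have hind_int : IntervalIntegrable (fun x => Set.indicator (Set.Ioi t) g x) volume 0 1 := by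
    rw [intervalIntegrable_iff_integrableOn_Ioc_of_le (by norm_num)]
    exact ((hgc.intervalIntegrable 0 1).1).indicator measurableSet_Ioi
  have split : (∫ x in (0:ℝ)..1, Cqt t x)
      = (∫ x in (0:ℝ)..1, Cq x) + 2 * ∫ x in (0:ℝ)..1, Set.indicator (Set.Ioi t) g x := by
    rw [show (fun x => Cqt t x) = fun x => Cq x + 2 * Set.indicator (Set.Ioi t) g x from
      funext hrw]
    rw [intervalIntegral.integral_add (hCqc.intervalIntegrable 0 1) (hind_int.const_mul 2),
      intervalIntegral.integral_const_mul]
  -- compute ∫ Cq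
  have hlog1 : ∫ x in (0:ℝ)..1, (1 - x) * Real.log (1 - x) = -(1/4) := by
    have := intervalIntegral.integral_comp_sub_left (a := (0:ℝ)) (b := 1)
      (fun u => u * Real.log u) 1
    simp only [sub_self, sub_zero] at this
    rw [this, integral_mul_log 1 (by norm_num)]
    simp
  have hCqint : (∫ x in (0:ℝ)..1, Cq x) = 0 := by
    unfold Cq
    have e1 : (fun x : ℝ => 1 + 2 * x * Real.log x + 2 * (1 - x) * Real.log (1 - x))
        = fun x : ℝ => 1 + 2 * (x * Real.log x) + 2 * ((1 - x) * Real.log (1 - x)) := by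
      funext x; ring
    rw [e1]
    rw [intervalIntegral.integral_add (f := fun x : ℝ => 1 + 2 * (x * Real.log x))
        (g := fun x : ℝ => 2 * ((1 - x) * Real.log (1 - x)))
        ((continuous_const.add (continuous_const.mul Real.continuous_mul_log)).intervalIntegrable 0 1)
        ((continuous_const.mul hc1).intervalIntegrable 0 1),
      intervalIntegral.integral_add (f := fun _ : ℝ => (1:ℝ)) (g := fun x : ℝ => 2 * (x * Real.log x))
        (intervalIntegrable_const)
        ((continuous_const.mul Real.continuous_mul_log).intervalIntegrable 0 1),
      intervalIntegral.integral_const_mul, intervalIntegral.integral_const_mul,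
      integral_mul_log 1 (by norm_num), hlog1]
    norm_num
  -- indicator integral
  have hindval : (∫ x in (0:ℝ)..1, Set.indicator (Set.Ioi t) g x) = ∫ x in t..1, g x := by
    rw [intervalIntegral.integral_of_le (by norm_num : (0:ℝ) ≤ 1),
      intervalIntegral.integral_of_le ht1,
      setIntegral_indicator measurableSet_Ioi, Set.Ioc_inter_Ioi,
      sup_of_le_right ht0]
  -- compute ∫ t..1 g
  have h2' : ∫ x in t..1, (1 - x) * Real.log (1 - x)
      = (1 - t)^2/2 * Real.log (1 - t) - (1 - t)^2/4 := by
    have := intervalIntegral.integral_comp_sub_left (a := t) (b := 1)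
      (fun u => u * Real.log u) 1
    simp only [sub_self] at this
    rw [this, integral_mul_log (1 - t) (by linarith)]
  have h3' : ∫ x in t..1, (x - t) * Real.log (x - t)
      = (1 - t)^2/2 * Real.log (1 - t) - (1 - t)^2/4 := by
    have := intervalIntegral.integral_comp_sub_right (a := t) (b := 1)
      (fun u => u * Real.log u) t
    simp only [sub_self] at this
    rw [this, integral_mul_log (1 - t) (by linarith)]
  have h1' : ∫ x in t..1, (-1 + x + (1 - t) * Real.log (1 - t))
      = (-1 + (1 - t) * Real.log (1 - t)) * (1 - t) + (1 - t^2)/2 := by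
    have : (fun x : ℝ => -1 + x + (1 - t) * Real.log (1 - t))
        = fun x : ℝ => (-1 + (1 - t) * Real.log (1 - t)) + x := by funext x; ring
    rw [this, intervalIntegral.integral_add intervalIntegrable_const
      intervalIntegral.intervalIntegrable_id, intervalIntegral.integral_const,
      integral_id]
    simp only [smul_eq_mul]
    ring
  have hgval : (∫ x in t..1, g x) = 0 := by
    have e : g = fun x => (-1 + x + (1 - t) * Real.log (1 - t))
        - (1 - x) * Real.log (1 - x) - (x - t) * Real.log (x - t) := rfl
    rw [e]
    rw [intervalIntegral.integral_sub
        (by apply Continuous.intervalIntegrable; continuity)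
        (hc2.intervalIntegrable t 1)]
    rw [intervalIntegral.integral_sub
        (by apply Continuous.intervalIntegrable; continuity)
        (hc1.intervalIntegrable t 1)]
    rw [h1', h2', h3']
    ring
  rw [split, hCqint, hindval, hgval]
  ring

end
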